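/- Let λ₀ ∈ ℂ and ρ > 0, and let f : ℂ → ℂ be analytic on the open disc of center λ₀ and radius ρ. Then for all λ, μ in the open disc of center λ₀ and radius ρ/2 with λ ≠ μ, the divided difference admits the absolutely convergent double expansion (f(λ) − f(μ))/(λ − μ) = ∑_{n=0}^{∞} ( f^{(n+1)}(λ₀)/(n+1)! ) · ∑_{i=0}^{n} (λ − λ₀)^{n−i} (μ − λ₀)^{i}. -/

import Mathlib

open Finset

theorem dividedDifference_taylor_expansion
    (z₀ : ℂ) (ρ : ℝ) (hρ : 0 < ρ) (f : ℂ → ℂ)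
    (hf : AnalyticOnNhd ℂ f (Metric.ball z₀ ρ))
    (l m : ℂ) (hl : l ∈ Metric.ball z₀ (ρ / 2)) (hm : m ∈ Metric.ball z₀ (ρ / 2))
    (hne : l ≠ m) :
    Summable (fun n : ℕ =>
      ‖(iteratedDeriv (n + 1) f z₀ / ((Nat.factorial (n + 1)) : ℂ)) *
        ∑ i ∈ Finset.range (n + 1), (l - z₀) ^ (n - i) * (m - z₀) ^ i‖) ∧
    (f l - f m) / (l - m) =
      ∑' n : ℕ, (iteratedDeriv (n + 1) f z₀ / ((Nat.factorial (n + 1)) : ℂ)) *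
        ∑ i ∈ Finset.range (n + 1), (l - z₀) ^ (n - i) * (m - z₀) ^ i := by
  -- Set up a power series expansion of `f` on a ball of radius `3ρ/4`.
  set R : NNReal := (ρ * 3 / 4).toNNReal with hR
  have hR0 : (0 : NNReal) < R := by
    rw [hR]; exact Real.toNNReal_pos.2 (by linarith)
  have hRcoe : (R : ℝ) = ρ * 3 / 4 := Real.coe_toNNReal _ (by linarith)
  have hball : Metric.closedBall z₀ (R : ℝ) ⊆ Metric.ball z₀ ρ := by
    rw [hRcoe]
    exact Metric.closedBall_subset_ball (by linarith)
  have hdiff : DifferentiableOn ℂ f (Metric.closedBall z₀ (R : ℝ)) :=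
    (hf.mono hball).differentiableOn
  have hp : HasFPowerSeriesOnBall f (cauchyPowerSeries f z₀ R) z₀ R :=
    hdiff.hasFPowerSeriesOnBall hR0
  set p := cauchyPowerSeries f z₀ R with hpdef
  set L := l - z₀ with hLdef
  set M := m - z₀ with hMdef
  have hL : ‖L‖ < ρ / 2 := by simpa [hLdef, Complex.dist_eq] using hl
  have hM : ‖M‖ < ρ / 2 := by simpa [hMdef, Complex.dist_eq] using hm
  -- coefficient formula
  have hcoeff : ∀ n : ℕ, iteratedDeriv n f z₀ = (n.factorial : ℂ) * p.coeff n := by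
    intro n
    have h1 := hp.factorial_smul (y := (1 : ℂ)) n
    rw [iteratedDeriv_eq_iteratedFDeriv, ← h1, nsmul_eq_mul]
    rfl
  have hfact_ne : ∀ n : ℕ, ((n.factorial : ℂ)) ≠ 0 := fun n =>
    Nat.cast_ne_zero.2 n.factorial_ne_zero
  have hterm : ∀ n : ℕ,
      (iteratedDeriv (n + 1) f z₀ / (((n+1).factorial : ℂ))) = p.coeff (n+1) := by
    intro n
    rw [hcoeff (n+1), mul_div_assoc, mul_comm, div_mul_cancel₀ _ (hfact_ne (n+1))]
  -- Summability
  have hrad : ((ρ/2).toNNReal : ENNReal) < p.radius := by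
    refine lt_of_lt_of_le ?_ hp.r_le
    rw [show ((ρ/2).toNNReal : ENNReal) = ((ρ/2 : ℝ).toNNReal : NNReal) from rfl]
    norm_cast
    rw [← NNReal.coe_lt_coe, hRcoe, Real.coe_toNNReal _ (by linarith)]
    linarith
  obtain ⟨q, hq, C, hC, hbound⟩ := p.norm_mul_pow_le_mul_pow_of_lt_radius hrad
  have hu : ((ρ/2).toNNReal : ℝ) = ρ/2 := Real.coe_toNNReal _ (by linarith)
  set t : ℝ := max ‖L‖ ‖M‖ with htdef
  have ht0 : 0 ≤ t := le_trans (norm_nonneg _) (le_max_left _ _)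
  have htlt : t < ρ/2 := max_lt hL hM
  set x : ℝ := q * (t / (ρ/2)) with hxdef
  have hx0 : 0 ≤ x := mul_nonneg hq.1.le (div_nonneg ht0 (by linarith))
  have hx1 : x < 1 := by
    have h1 : t / (ρ/2) < 1 := (div_lt_one (by linarith)).2 htlt
    calc x ≤ 1 * (t / (ρ/2)) := mul_le_mul_of_nonneg_right hq.2.le
            (div_nonneg ht0 (by linarith))
    _ < 1 := by simpa using h1
  -- bound on the geometric-type sums
  have hS : ∀ n : ℕ, ‖∑ i ∈ Finset.range (n + 1), L ^ (n - i) * M ^ i‖ ≤ (n+1) * t^n := by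
    intro n
    calc ‖∑ i ∈ Finset.range (n + 1), L ^ (n - i) * M ^ i‖
        ≤ ∑ i ∈ Finset.range (n + 1), ‖L ^ (n - i) * M ^ i‖ := norm_sum_le _ _
    _ ≤ ∑ i ∈ Finset.range (n + 1), t^n := by
        refine Finset.sum_le_sum fun i hi => ?_
        rw [Finset.mem_range] at hi
        have : ‖L ^ (n - i) * M ^ i‖ = ‖L‖^(n-i) * ‖M‖^i := by
          rw [norm_mul, norm_pow, norm_pow]
        rw [this]
        calc ‖L‖^(n-i) * ‖M‖^i ≤ t^(n-i) * t^i := by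
              gcongr <;> [exact le_max_left _ _; exact le_max_right _ _]
        _ = t^n := by rw [← pow_add]; congr 1; omega
    _ = (n+1) * t^n := by rw [Finset.sum_const, Finset.card_range, nsmul_eq_mul]; push_cast; ring
  have hcb : ∀ n : ℕ, ‖p.coeff n‖ ≤ C * q^n / (ρ/2)^n := by
    intro n
    have h1 := hbound n
    rw [p.norm_apply_eq_norm_coef, hu] at h1
    exact (le_div_iff₀ (by positivity)).2 h1
  have key : ∀ n : ℕ,
      ‖(iteratedDeriv (n + 1) f z₀ / (((n+1).factorial : ℂ))) *
        ∑ i ∈ Finset.range (n + 1), L ^ (n - i) * M ^ i‖ ≤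
        (C * q / (ρ/2)) * ((n+1) * x^n) := by
    intro n
    rw [hterm n, norm_mul]
    calc ‖p.coeff (n+1)‖ * ‖∑ i ∈ Finset.range (n + 1), L ^ (n - i) * M ^ i‖
        ≤ (C * q^(n+1) / (ρ/2)^(n+1)) * ((n+1) * t^n) :=
          mul_le_mul (hcb (n+1)) (hS n) (norm_nonneg _)
            (div_nonneg (mul_nonneg hC.le (pow_nonneg hq.1.le _)) (pow_nonneg (by linarith) _))
    _ = (C * q / (ρ/2)) * ((n+1) * x^n) := by
          rw [hxdef]
          rw [mul_pow, div_pow]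
          field_simp
          have hρn : ρ^n * ρ⁻¹^n = 1 := by rw [← mul_pow, mul_inv_cancel₀ hρ.ne', one_pow]
          linear_combination (-(q * q^n * t^n * ρ * 2^n * 2)) * hρn
  have hsummable_aux : Summable (fun n : ℕ => (C * q / (ρ/2)) * (((n:ℝ)+1) * x^n)) := by
    apply Summable.mul_left
    have h1 : Summable (fun n : ℕ => (n:ℝ) * x^n) := by
      have := summable_pow_mul_geometric_of_norm_lt_one (R := ℝ) 1 (r := x)
        (by rwa [Real.norm_eq_abs, abs_of_nonneg hx0])
      simpa using this
    have h2 : Summable (fun n : ℕ => x^n) := summable_geometric_of_lt_one hx0 hx1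
    simpa [add_mul, one_mul] using h1.add h2
  have hsumm : Summable (fun n : ℕ =>
      ‖(iteratedDeriv (n + 1) f z₀ / (((n+1).factorial : ℂ))) *
        ∑ i ∈ Finset.range (n + 1), L ^ (n - i) * M ^ i‖) := by
    refine Summable.of_nonneg_of_le (fun n => norm_nonneg _) (fun n => ?_) hsummable_aux
    exact key n
  refine ⟨by exact_mod_cast hsumm, ?_⟩
  -- now the equality
  have hmem : ∀ z : ℂ, z ∈ Metric.ball z₀ (ρ/2) → z ∈ Metric.eball z₀ (R : ENNReal) := by
    intro z hz
    rw [Metric.emetric_ball_nnreal]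
    rw [Metric.mem_ball] at hz ⊢
    calc dist z z₀ < ρ/2 := hz
    _ ≤ (R : ℝ) := by rw [hRcoe]; linarith
  have hsl : HasSum (fun n : ℕ => p.coeff n * L^n) (f l) := by
    have := hp.hasSum_sub (hmem l hl)
    simpa [FormalMultilinearSeries.apply_eq_pow_smul_coeff, smul_eq_mul, mul_comm] using this
  have hsm : HasSum (fun n : ℕ => p.coeff n * M^n) (f m) := by
    have := hp.hasSum_sub (hmem m hm)
    simpa [FormalMultilinearSeries.apply_eq_pow_smul_coeff, smul_eq_mul, mul_comm] using this
  have hsub : HasSum (fun n : ℕ => p.coeff n * (L^n - M^n)) (f l - f m) := by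
    simpa [mul_sub] using hsl.sub hsm
  have hshift : HasSum (fun n : ℕ => p.coeff (n+1) * (L^(n+1) - M^(n+1))) (f l - f m) := by
    have h2 := (hasSum_nat_add_iff' (f := fun n : ℕ => p.coeff n * (L^n - M^n)) 1).2 hsub
    simpa using h2
  have hgeom : ∀ n : ℕ, L^(n+1) - M^(n+1) =
      (∑ i ∈ Finset.range (n + 1), L ^ (n - i) * M ^ i) * (l - m) := by
    intro n
    have := geom_sum₂_mul L M (n+1)
    rw [← this]
    congr 1
    · rw [← Finset.sum_range_reflect]
      refine Finset.sum_congr rfl fun i hi => ?_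
      rw [Finset.mem_range] at hi
      congr 2 <;> omega
    · rw [hLdef, hMdef]; ring
  have hfinal : HasSum (fun n : ℕ =>
      (p.coeff (n+1) * ∑ i ∈ Finset.range (n + 1), L ^ (n - i) * M ^ i) * (l - m))
      (f l - f m) := by
    refine hshift.congr_fun fun n => ?_
    rw [hgeom n]; ring
  have hlm : l - m ≠ 0 := sub_ne_zero.2 hne
  have hdiv : HasSum (fun n : ℕ =>
      p.coeff (n+1) * ∑ i ∈ Finset.range (n + 1), L ^ (n - i) * M ^ i)
      ((f l - f m) / (l - m)) := by
    have := hfinal.div_const (l - m)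
    refine this.congr_fun fun n => ?_
    field_simp
  rw [← hdiv.tsum_eq]
  refine tsum_congr fun n => ?_
  rw [hterm n]
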